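/- For all ξ, η ∈ ℂ and r ∈ ℝ, the point Φ(ξ,η,r) ∈ ℂ × ℝ satisfies: (1) Φ(ξ,η,r) = Φ(ξ,η,0) + r•U(ξ); (2) ⟪Φ(ξ,η,0), U(ξ)⟫ = 0; and (3) ‖U(ξ)‖ = 1. Hence r ↦ Φ(ξ,η,r) is the unit-speed parametrization of the oriented line with direction U(ξ) whose point closest to the origin is Φ(ξ,η,0). -/

import Mathlib

open Complex ComplexConjugate

noncomputable section

/-- The Euclidean inner product on `ℝ³ ≃ ℂ × ℝ`: `⟪(z₁,t₁),(z₂,t₂)⟫ = Re(z₁ conj z₂) + t₁ t₂`. -/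
def inner3 (p q : ℂ × ℝ) : ℝ := (p.1 * conj q.1).re + p.2 * q.2

/-- The Euclidean norm on `ℝ³ ≃ ℂ × ℝ`. -/
def norm3 (p : ℂ × ℝ) : ℝ := Real.sqrt (inner3 p p)

/-- Inverse stereographic projection: the unit direction vector of the oriented line `ξ`. -/
def Udir (ξ : ℂ) : ℂ × ℝ :=
  (2 * ξ / ((1 + Complex.normSq ξ : ℝ) : ℂ),
   (1 - Complex.normSq ξ) / (1 + Complex.normSq ξ))

/-- The map `Φ : 𝕃 × ℝ → ℝ³ ≃ ℂ × ℝ` of the correspondence space. -/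
def Phi (ξ η : ℂ) (r : ℝ) : ℂ × ℝ :=
  ((2 * (η - conj η * ξ ^ 2) + 2 * ξ * ((1 + Complex.normSq ξ : ℝ) : ℂ) * (r : ℂ))
      / (((1 + Complex.normSq ξ) ^ 2 : ℝ) : ℂ),
   ((-2 * (η * conj ξ + conj η * ξ)
        + (((1 - Complex.normSq ξ * Complex.normSq ξ) * r : ℝ) : ℂ))).re
      / (1 + Complex.normSq ξ) ^ 2)

/-- `r ↦ Φ(ξ,η,r)` is the unit-speed parametrization of the oriented
line with direction `U(ξ)` whose point closest to the origin is `Φ(ξ,η,0)`. -/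
theorem Phi_parametrizes_oriented_lines (ξ η : ℂ) (r : ℝ) :
    Phi ξ η r = Phi ξ η 0 + r • Udir ξ ∧
    inner3 (Phi ξ η 0) (Udir ξ) = 0 ∧
    norm3 (Udir ξ) = 1 := by
  set q := Complex.normSq ξ with hq
  have hq0 : 0 ≤ q := Complex.normSq_nonneg ξ
  have hs : (0:ℝ) < 1 + q := by linarith
  have hs' : (1 + q : ℝ) ≠ 0 := ne_of_gt hs
  have hsc : ((1 + q : ℝ) : ℂ) ≠ 0 := by exact_mod_cast hs'
  have hcast : (((1 + q) ^ 2 : ℝ) : ℂ) = ((1 + q : ℝ) : ℂ) ^ 2 := by push_cast; ring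
  have hmc : ξ * conj ξ = ((q : ℝ) : ℂ) := by rw [hq]; exact_mod_cast Complex.mul_conj ξ
  refine ⟨?_, ?_, ?_⟩
  · have h1 : (Phi ξ η r).1 = (Phi ξ η 0).1 + (r • Udir ξ).1 := by
      simp only [Phi, Udir, Prod.smul_fst, Complex.real_smul, Complex.ofReal_zero,
        mul_zero, add_zero, ← hq, hcast]
      rw [add_div]
      congr 1
      rw [pow_two, ← mul_div_assoc, div_eq_div_iff (mul_ne_zero hsc hsc) hsc]
      ring
    have h2 : (Phi ξ η r).2 = (Phi ξ η 0).2 + (r • Udir ξ).2 := by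
      simp only [Phi, Udir, Prod.smul_snd, smul_eq_mul, Complex.ofReal_zero, mul_zero,
        zero_mul, Complex.ofReal_mul, add_zero, Complex.add_re, Complex.ofReal_re, ← hq]
      field_simp
      rw [← Complex.ofReal_mul, Complex.ofReal_re]
      ring
    exact Prod.ext h1 h2
  · simp only [inner3, Phi, Udir, Complex.ofReal_zero, mul_zero, zero_mul, add_zero,
      map_div₀, map_mul, Complex.conj_ofReal, map_ofNat, ← hq]
    have e1 : 2 * (η - conj η * ξ ^ 2) / (((1 + q) ^ 2 : ℝ) : ℂ) *
        (2 * conj ξ / ((1 + q : ℝ) : ℂ))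
        = (4 * (η * conj ξ - ((q:ℝ):ℂ) * conj (η * conj ξ))) / ((((1 + q)^3 : ℝ)) : ℂ) := by
      rw [div_mul_div_comm]
      have hsc2 : (((1 + q) ^ 2 : ℝ) : ℂ) ≠ 0 := by exact_mod_cast pow_ne_zero 2 hs'
      have hsc3 : (((1 + q) ^ 3 : ℝ) : ℂ) ≠ 0 := by exact_mod_cast pow_ne_zero 3 hs'
      rw [div_eq_div_iff (mul_ne_zero hsc2 hsc) hsc3]
      push_cast
      simp only [map_mul, Complex.conj_conj]
      linear_combination (-(4:ℂ) * conj η * ξ * ((1:ℂ)+(q:ℂ))^3) * hmc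
    rw [e1]
    have e2 : ((4 * (η * conj ξ - ((q:ℝ):ℂ) * conj (η * conj ξ))) /
        ((((1 + q)^3 : ℝ)) : ℂ)).re
        = 4 * ((η * conj ξ).re - q * (η * conj ξ).re) / (1 + q)^3 := by
      rw [Complex.div_ofReal_re]
      congr 1
      simp [Complex.mul_re, Complex.sub_re, Complex.ofReal_re, Complex.ofReal_im,
        Complex.conj_re, Complex.conj_im]
    rw [e2]
    have e3 : ((-2 : ℂ) * (η * conj ξ + conj η * ξ)).re = -4 * (η * conj ξ).re := by
      have : conj η * ξ = conj (η * conj ξ) := by simp [map_mul]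
      rw [this, Complex.add_conj]
      simp
      ring
    rw [e3]
    field_simp
    ring
  · have h1 : inner3 (Udir ξ) (Udir ξ) = 1 := by
      simp only [inner3, Udir, Complex.mul_conj, Complex.ofReal_re]
      rw [Complex.normSq_div, Complex.normSq_mul, Complex.normSq_ofReal, ← hq]
      have h2' : Complex.normSq 2 = 4 := by
        norm_num [Complex.normSq_apply]
      rw [h2']
      field_simp
      ring
    simp [norm3, h1]

end
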